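/- Let n and r be positive integers. If there exist n+1 pairwise non-proportional nonzero vectors ψ₁,…,ψ_{n+1} ∈ ℂ² with χ(ψ_i^{⊗n}) ≤ r for all i, then χ_n ≤ r·(n+1). Similarly, if there exist n+1 pairwise non-proportional nonzero vectors ψ₁,…,ψ_{n+1} ∈ ℂ² with χℝ(ψ_i^{⊗n}) ≤ r for all i, then χ_nℝ ≤ r·(n+1). -/

import Mathlib

open scoped BigOperators Classical

noncomputable section

namespace StabPaper

/-- The space `𝔽₂ⁿ` of length-`n` bitstrings. -/
abbrev F2 (n : ℕ) := Fin n → ZMod 2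

/-- `A ⊆ 𝔽₂ⁿ` is a (nonempty) affine linear subspace. -/
def IsAffineSubspace {n : ℕ} (A : Set (F2 n)) : Prop :=
  A.Nonempty ∧ ∀ x ∈ A, ∀ y ∈ A, ∀ z ∈ A, x + y + z ∈ A

/-- `l : 𝔽₂ⁿ → 𝔽₂` is a linear form. -/
def IsLinearForm {n : ℕ} (l : F2 n → ZMod 2) : Prop :=
  ∀ x y, l (x + y) = l x + l y

/-- `q : 𝔽₂ⁿ → 𝔽₂` is a quadratic form (polynomial of degree at most 2
with vanishing constant term). -/
def IsQuadraticForm {n : ℕ} (q : F2 n → ZMod 2) : Prop :=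
  q 0 = 0 ∧ ∀ x y z, q (x + y + z) = q (x + y) + q (x + z) + q (y + z) + q x + q y + q z

/-- A stabilizer state vector on `n` qubits. -/
def IsStabilizerState {n : ℕ} (σ : F2 n → ℂ) : Prop :=
  ∃ (A : Set (F2 n)) (l q : F2 n → ZMod 2),
    IsAffineSubspace A ∧ IsLinearForm l ∧ IsQuadraticForm q ∧
    ∀ x, σ x = if x ∈ A then Complex.I ^ (l x).val * (-1 : ℂ) ^ (q x).val else 0

/-- A real stabilizer state vector on `n` qubits (the case `l = 0`). -/
def IsRealStabilizerState {n : ℕ} (σ : F2 n → ℂ) : Prop :=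
  ∃ (A : Set (F2 n)) (q : F2 n → ZMod 2),
    IsAffineSubspace A ∧ IsQuadraticForm q ∧
    ∀ x, σ x = if x ∈ A then (-1 : ℂ) ^ (q x).val else 0

/-- The stabilizer rank: the least `r` such that `ψ` is a `ℂ`-linear combination of
`r` stabilizer state vectors. -/
def stabRank {n : ℕ} (ψ : F2 n → ℂ) : ℕ :=
  sInf {r : ℕ | ∃ (c : Fin r → ℂ) (σ : Fin r → (F2 n → ℂ)),
    (∀ i, IsStabilizerState (σ i)) ∧ ψ = ∑ i, c i • σ i}

/-- The real stabilizer rank: the least `r` such that `ψ` is a `ℂ`-linear combination of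
`r` real stabilizer state vectors. -/
def realStabRank {n : ℕ} (ψ : F2 n → ℂ) : ℕ :=
  sInf {r : ℕ | ∃ (c : Fin r → ℂ) (σ : Fin r → (F2 n → ℂ)),
    (∀ i, IsRealStabilizerState (σ i)) ∧ ψ = ∑ i, c i • σ i}

/-- The `n`-fold tensor power of a one-qubit vector `ψ : ℂ²`. -/
def tensorPow (ψ : ZMod 2 → ℂ) (n : ℕ) : F2 n → ℂ := fun x => ∏ i, ψ (x i)

/-- The Euclidean norm on `ℂ^{𝔽₂ⁿ}`. -/
def l2norm {n : ℕ} (φ : F2 n → ℂ) : ℝ := Real.sqrt (∑ x, ‖φ x‖ ^ 2)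

/-- The δ-approximate stabilizer rank. -/
def approxStabRank {n : ℕ} (δ : ℝ) (ψ : F2 n → ℂ) : ℕ :=
  sInf {r : ℕ | ∃ φ : F2 n → ℂ, φ ≠ 0 ∧
    l2norm (fun x => ((l2norm φ : ℝ) : ℂ)⁻¹ * φ x - ((l2norm ψ : ℝ) : ℂ)⁻¹ * ψ x) < δ ∧
    stabRank φ = r}

/-- The one-qubit vector `a·e₀ + b·e₁ ∈ ℂ²`. -/
def qubit (a b : ℂ) : ZMod 2 → ℂ := fun x => if x = 0 then a else b

/-- A nonzero `ψ ∈ ℂ²` is a one-qubit stabilizer state vector iff it is proportional to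
one of `e₀, e₁, e₀+e₁, e₀−e₁, e₀+i·e₁, e₀−i·e₁`. -/
def IsQubitStabVec (ψ : ZMod 2 → ℂ) : Prop :=
  ∃ c : ℂ, c ≠ 0 ∧ (ψ = c • qubit 1 0 ∨ ψ = c • qubit 0 1 ∨ ψ = c • qubit 1 1 ∨
    ψ = c • qubit 1 (-1) ∨ ψ = c • qubit 1 Complex.I ∨ ψ = c • qubit 1 (-Complex.I))

/-- The `n`-th generic stabilizer rank `χ_n`. -/
def genStabRank (n : ℕ) : ℕ :=
  sSup {r : ℕ | ∃ ψ : ZMod 2 → ℂ, ψ ≠ 0 ∧ stabRank (tensorPow ψ n) = r}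

/-- The `n`-th generic real stabilizer rank `χ_nℝ`. -/
def genRealStabRank (n : ℕ) : ℕ :=
  sSup {r : ℕ | ∃ ψ : ZMod 2 → ℂ, ψ ≠ 0 ∧ realStabRank (tensorPow ψ n) = r}


/-! ### Auxiliary material -/

lemma zmod2_cases (z : ZMod 2) : z = 0 ∨ z = 1 := by revert z; decide

/-- Expansion of a product of linear binary forms into monomials. -/
lemma prod_linear_expand {ι : Type*} [DecidableEq ι] (s : Finset ι) (f g : ι → ℂ) :
    ∃ c : ℕ → ℂ, (∀ w, s.card < w → c w = 0) ∧
      ∀ a b : ℂ, (∏ k ∈ s, (f k * a + g k * b)) =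
        ∑ w ∈ Finset.range (s.card + 1), c w * a ^ (s.card - w) * b ^ w := by
  classical
  induction s using Finset.induction_on with
  | empty =>
      refine ⟨fun w => if w = 0 then 1 else 0, ?_, ?_⟩
      · intro w hw; simp at hw ⊢; omega
      · intro a b; simp
  | insert k s hk ih =>
      obtain ⟨c, hc0, hc⟩ := ih
      set m := s.card with hm
      refine ⟨fun w => f k * c w + g k * (if w = 0 then 0 else c (w - 1)), ?_, ?_⟩
      · intro w hw
        rw [Finset.card_insert_of_notMem hk] at hw
        have h1 : c w = 0 := hc0 w (by omega)
        have h2 : (if w = 0 then (0:ℂ) else c (w - 1)) = 0 := by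
          rw [if_neg (by omega)]
          exact hc0 (w - 1) (by omega)
        show f k * c w + g k * (if w = 0 then 0 else c (w - 1)) = (0:ℂ)
        rw [h1, h2]; ring
      · intro a b
        rw [Finset.prod_insert hk, hc a b, Finset.card_insert_of_notMem hk, ← hm]
        have hsplit : ∑ w ∈ Finset.range (m + 1 + 1),
            (f k * c w + g k * (if w = 0 then 0 else c (w - 1))) * a ^ (m + 1 - w) * b ^ w
            = (∑ w ∈ Finset.range (m + 1 + 1), f k * c w * a ^ (m + 1 - w) * b ^ w)
              + ∑ w ∈ Finset.range (m + 1 + 1),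
                  g k * (if w = 0 then 0 else c (w - 1)) * a ^ (m + 1 - w) * b ^ w := by
          rw [← Finset.sum_add_distrib]
          exact Finset.sum_congr rfl fun w _ => by ring
        rw [hsplit]
        have h1 : (∑ w ∈ Finset.range (m + 1 + 1), f k * c w * a ^ (m + 1 - w) * b ^ w)
            = ∑ w ∈ Finset.range (m + 1), f k * c w * a ^ (m + 1 - w) * b ^ w := by
          rw [Finset.sum_range_succ, hc0 (m + 1) (by omega)]
          simp
        have h2 : (∑ w ∈ Finset.range (m + 1 + 1),
              g k * (if w = 0 then 0 else c (w - 1)) * a ^ (m + 1 - w) * b ^ w)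
            = ∑ w ∈ Finset.range (m + 1), g k * c w * a ^ (m - w) * b ^ (w + 1) := by
          rw [Finset.sum_range_succ']
          have hz : (g k * if (0:ℕ) = 0 then (0:ℂ) else c (0 - 1)) * a ^ (m + 1 - 0) * b ^ 0
              = 0 := by simp
          rw [hz, add_zero]
          refine Finset.sum_congr rfl fun w _ => ?_
          simp [Nat.succ_sub_succ]
        rw [h1, h2, add_mul, Finset.mul_sum, Finset.mul_sum, ← Finset.sum_add_distrib,
          ← Finset.sum_add_distrib]
        refine Finset.sum_congr rfl fun w hw => ?_
        have hwm : w ≤ m := by simpa using Nat.lt_succ_iff.mp (Finset.mem_range.mp hw)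
        have hpow : a ^ (m + 1 - w) = a ^ (m - w) * a := by
          rw [← pow_succ]; congr 1; omega
        rw [hpow]; ring

/-- Non-proportionality implies nonvanishing 2×2 determinant. -/
lemma det_ne {φ χ : ZMod 2 → ℂ} (hχ : χ ≠ 0) (h : ∀ c : ℂ, φ ≠ c • χ) :
    φ 0 * χ 1 - χ 0 * φ 1 ≠ 0 := by
  intro hd
  have hχ' : χ 0 ≠ 0 ∨ χ 1 ≠ 0 := by
    by_contra hcon
    push_neg at hcon
    apply hχ
    funext z
    rcases zmod2_cases z with rfl | rfl
    · simpa using hcon.1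
    · simpa using hcon.2
  rcases hχ' with h0 | h1
  · refine h (φ 0 / χ 0) (funext fun z => ?_)
    rcases zmod2_cases z with rfl | rfl
    · simp only [Pi.smul_apply, smul_eq_mul]; field_simp
    · simp only [Pi.smul_apply, smul_eq_mul]
      field_simp
      linear_combination -hd
  · refine h (φ 1 / χ 1) (funext fun z => ?_)
    rcases zmod2_cases z with rfl | rfl
    · simp only [Pi.smul_apply, smul_eq_mul]
      field_simp
      linear_combination hd
    · simp only [Pi.smul_apply, smul_eq_mul]; field_simp

/-- Hamming weight of a bitstring. -/
def wt {n : ℕ} (x : F2 n) : ℕ := ∑ i, (x i).val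

lemma wt_le {n : ℕ} (x : F2 n) : wt x ≤ n := by
  calc wt x ≤ ∑ _i : Fin n, 1 :=
        Finset.sum_le_sum fun i _ => by
          have := ZMod.val_lt (x i); omega
    _ = n := by simp

lemma tensorPow_eq {n : ℕ} (ψ : ZMod 2 → ℂ) (x : F2 n) :
    tensorPow ψ n x = ψ 0 ^ (n - wt x) * ψ 1 ^ wt x := by
  have h1 : ∀ i : Fin n, ψ (x i) = ψ 0 ^ (1 - (x i).val) * ψ 1 ^ (x i).val := by
    intro i
    rcases zmod2_cases (x i) with h | h <;> rw [h] <;> simp [ZMod.val_one]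
  have h2 : (∑ i, (1 - (x i).val)) + ∑ i, (x i).val = n := by
    rw [← Finset.sum_add_distrib]
    calc (∑ i : Fin n, ((1 - (x i).val) + (x i).val)) = ∑ _i : Fin n, 1 :=
          Finset.sum_congr rfl fun i _ => by
            have := ZMod.val_lt (x i); omega
      _ = n := by simp
  have h3 : (∑ i, (1 - (x i).val)) = n - wt x := by unfold wt; omega
  unfold tensorPow
  rw [Finset.prod_congr rfl fun i _ => h1 i, Finset.prod_mul_distrib,
    Finset.prod_pow_eq_pow_sum, Finset.prod_pow_eq_pow_sum, h3]
  rfl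

/-- The coefficient vector of `ψ^{⊗n}` with respect to the weight functions. -/
def coeffVec (n : ℕ) (ψ : ZMod 2 → ℂ) : Fin (n + 1) → ℂ :=
  fun w => ψ 0 ^ (n - (w : ℕ)) * ψ 1 ^ (w : ℕ)

lemma coeffVec_indep {n : ℕ} (ψs : Fin (n + 1) → (ZMod 2 → ℂ)) (hne : ∀ i, ψs i ≠ 0)
    (hprop : ∀ i j, i ≠ j → ∀ c : ℂ, ψs i ≠ c • ψs j) :
    LinearIndependent ℂ (fun i => coeffVec n (ψs i)) := by
  rw [Fintype.linearIndependent_iff]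
  intro t ht j
  obtain ⟨c, hc0, hc⟩ := prod_linear_expand (Finset.univ.erase j)
    (fun k => ψs k 1) (fun k => -(ψs k 0))
  have hcard : (Finset.univ.erase j).card = n := by
    rw [Finset.card_erase_of_mem (Finset.mem_univ j)]
    simp
  rw [hcard] at hc0 hc
  set P : Fin (n + 1) → ℂ :=
    fun i => ∏ k ∈ Finset.univ.erase j, (ψs k 1 * ψs i 0 + -(ψs k 0) * ψs i 1) with hP
  have hPsum : ∀ i, P i = ∑ w ∈ Finset.range (n + 1),
      c w * (ψs i 0) ^ (n - w) * (ψs i 1) ^ w := fun i => hc _ _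
  have hmain : ∑ i, t i * P i = 0 := by
    have hw : ∀ w : Fin (n + 1), (∑ i, t i * coeffVec n (ψs i) w) = 0 := by
      intro w
      have := congrFun ht w
      simpa [Finset.sum_apply] using this
    calc ∑ i, t i * P i
        = ∑ i, ∑ w ∈ Finset.range (n + 1),
            t i * (c w * (ψs i 0) ^ (n - w) * (ψs i 1) ^ w) := by
          refine Finset.sum_congr rfl fun i _ => ?_
          rw [hPsum i, Finset.mul_sum]
      _ = ∑ w ∈ Finset.range (n + 1), ∑ i,
            t i * (c w * (ψs i 0) ^ (n - w) * (ψs i 1) ^ w) := Finset.sum_comm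
      _ = ∑ w ∈ Finset.range (n + 1), c w *
            (∑ i, t i * ((ψs i 0) ^ (n - w) * (ψs i 1) ^ w)) := by
          refine Finset.sum_congr rfl fun w _ => ?_
          rw [Finset.mul_sum]
          exact Finset.sum_congr rfl fun i _ => by ring
      _ = ∑ w ∈ Finset.range (n + 1), c w * 0 := by
          refine Finset.sum_congr rfl fun w hw' => ?_
          congr 1
          have hwlt : w < n + 1 := Finset.mem_range.mp hw'
          have := hw ⟨w, hwlt⟩
          simpa [coeffVec] using this
      _ = 0 := by simp
  have hzero : ∀ i ∈ Finset.univ, i ≠ j → t i * P i = 0 := by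
    intro i _ hij
    have : P i = 0 :=
      Finset.prod_eq_zero (Finset.mem_erase.mpr ⟨hij, Finset.mem_univ i⟩) (by ring)
    rw [this, mul_zero]
  have hsum : ∑ i, t i * P i = t j * P j :=
    Finset.sum_eq_single j hzero (fun h => absurd (Finset.mem_univ j) h)
  have hPj : P j ≠ 0 := by
    rw [hP]
    rw [Finset.prod_ne_zero_iff]
    intro k hk
    have hkj : k ≠ j := (Finset.mem_erase.mp hk).1
    have hd := det_ne (hne k) (hprop j k hkj.symm)
    intro hcon
    apply hd
    linear_combination hcon
  have : t j * P j = 0 := by rw [← hsum]; exact hmain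
  exact (mul_eq_zero.mp this).resolve_right hPj

lemma exists_combo {n : ℕ} (ψs : Fin (n + 1) → (ZMod 2 → ℂ)) (hne : ∀ i, ψs i ≠ 0)
    (hprop : ∀ i j, i ≠ j → ∀ c : ℂ, ψs i ≠ c • ψs j) (ψ : ZMod 2 → ℂ) :
    ∃ t : Fin (n + 1) → ℂ, tensorPow ψ n = ∑ i, t i • tensorPow (ψs i) n := by
  have hind := coeffVec_indep ψs hne hprop
  have htop : Submodule.span ℂ (Set.range fun i => coeffVec n (ψs i)) = ⊤ :=
    hind.span_eq_top_of_card_eq_finrank (by simp)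
  have hmem : coeffVec n ψ ∈ Submodule.span ℂ (Set.range fun i => coeffVec n (ψs i)) := by
    rw [htop]; trivial
  obtain ⟨t, ht⟩ := (Submodule.mem_span_range_iff_exists_fun ℂ).mp hmem
  refine ⟨t, funext fun x => ?_⟩
  have hwfin : wt x < n + 1 := Nat.lt_succ_of_le (wt_le x)
  have hx : ∀ φ : ZMod 2 → ℂ, tensorPow φ n x = coeffVec n φ ⟨wt x, hwfin⟩ :=
    fun φ => tensorPow_eq φ x
  have := congrFun ht ⟨wt x, hwfin⟩
  rw [Finset.sum_apply] at this
  rw [hx ψ, ← this, Finset.sum_apply]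
  exact Finset.sum_congr rfl fun i _ => by
    simp only [Pi.smul_apply, smul_eq_mul, hx (ψs i)]

/-! ### Rank machinery, uniform in the stabilizer predicate -/

def rankSet {n : ℕ} (P : (F2 n → ℂ) → Prop) (ψ : F2 n → ℂ) : Set ℕ :=
  {r : ℕ | ∃ (c : Fin r → ℂ) (σ : Fin r → (F2 n → ℂ)),
    (∀ i, P (σ i)) ∧ ψ = ∑ i, c i • σ i}

lemma stabRank_eq {n : ℕ} (ψ : F2 n → ℂ) :
    stabRank ψ = sInf (rankSet IsStabilizerState ψ) := rfl

lemma realStabRank_eq {n : ℕ} (ψ : F2 n → ℂ) :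
    realStabRank ψ = sInf (rankSet IsRealStabilizerState ψ) := rfl

lemma mem_rankSet_of_decomp {n : ℕ} (P : (F2 n → ℂ) → Prop) {ι : Type} [Fintype ι]
    {ψ : F2 n → ℂ} (c : ι → ℂ) (σ : ι → F2 n → ℂ)
    (hσ : ∀ i, P (σ i)) (hψ : ψ = ∑ i, c i • σ i) :
    Fintype.card ι ∈ rankSet P ψ := by
  obtain e := Fintype.equivFin ι
  refine ⟨c ∘ e.symm, σ ∘ e.symm, fun i => hσ _, ?_⟩
  rw [hψ]
  exact (Equiv.sum_comp e.symm fun i => c i • σ i).symm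

lemma delta_real {n : ℕ} (x0 : F2 n) :
    IsRealStabilizerState (fun x => if x = x0 then (1 : ℂ) else 0) := by
  refine ⟨{x0}, fun _ => 0, ⟨⟨x0, rfl⟩, ?_⟩, ⟨rfl, by intros; simp⟩, ?_⟩
  · intro x hx y hy z hz
    simp only [Set.mem_singleton_iff] at hx hy hz ⊢
    rw [hx, hy, hz]
    have h3 : ∀ a : ZMod 2, a + a + a = a := by decide
    funext i
    exact h3 (x0 i)
  · intro x
    simp [Set.mem_singleton_iff, eq_comm]

lemma real_to_stab {n : ℕ} {σ : F2 n → ℂ} (h : IsRealStabilizerState σ) :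
    IsStabilizerState σ := by
  obtain ⟨A, q, hA, hq, hval⟩ := h
  exact ⟨A, fun _ => 0, q, hA, fun x y => by simp, hq, fun x => by simpa using hval x⟩

lemma rankSet_nonempty {n : ℕ} (P : (F2 n → ℂ) → Prop)
    (hδ : ∀ x0 : F2 n, P (fun x => if x = x0 then (1 : ℂ) else 0)) (ψ : F2 n → ℂ) :
    (rankSet P ψ).Nonempty := by
  refine ⟨Fintype.card (F2 n),
    mem_rankSet_of_decomp P (fun x0 => ψ x0) (fun x0 => fun x => if x = x0 then 1 else 0)
      hδ ?_⟩
  funext x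
  rw [Finset.sum_apply]
  simp [Finset.sum_ite_eq]

lemma rank_tensorPow_le {n r : ℕ} (P : (F2 n → ℂ) → Prop)
    (hδ : ∀ x0 : F2 n, P (fun x => if x = x0 then (1 : ℂ) else 0))
    (ψs : Fin (n + 1) → (ZMod 2 → ℂ)) (hne : ∀ i, ψs i ≠ 0)
    (hprop : ∀ i j, i ≠ j → ∀ c : ℂ, ψs i ≠ c • ψs j)
    (hle : ∀ i, sInf (rankSet P (tensorPow (ψs i) n)) ≤ r) (ψ : ZMod 2 → ℂ) :
    sInf (rankSet P (tensorPow ψ n)) ≤ r * (n + 1) := by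
  obtain ⟨t, ht⟩ := exists_combo ψs hne hprop ψ
  set k : Fin (n + 1) → ℕ := fun i => sInf (rankSet P (tensorPow (ψs i) n)) with hk
  have hdec : ∀ i, ∃ (c : Fin (k i) → ℂ) (σ : Fin (k i) → (F2 n → ℂ)),
      (∀ j, P (σ j)) ∧ tensorPow (ψs i) n = ∑ j, c j • σ j :=
    fun i => Nat.sInf_mem (rankSet_nonempty P hδ (tensorPow (ψs i) n))
  choose cs σs hσ hrep using hdec
  have hdecomp : tensorPow ψ n
      = ∑ p : (Σ i : Fin (n + 1), Fin (k i)), (t p.1 * cs p.1 p.2) • σs p.1 p.2 := by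
    rw [ht, ← Finset.univ_sigma_univ, Finset.sum_sigma]
    refine Finset.sum_congr rfl fun i _ => ?_
    rw [hrep i, Finset.smul_sum]
    exact Finset.sum_congr rfl fun j _ => smul_smul _ _ _
  have hcard := Nat.sInf_le
    (mem_rankSet_of_decomp P _ _
      (fun p : (Σ i : Fin (n + 1), Fin (k i)) => hσ p.1 p.2) hdecomp)
  calc sInf (rankSet P (tensorPow ψ n))
      ≤ Fintype.card (Σ i : Fin (n + 1), Fin (k i)) := hcard
    _ = ∑ i, k i := by simp
    _ ≤ ∑ _i : Fin (n + 1), r := Finset.sum_le_sum fun i _ => hle i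
    _ = r * (n + 1) := by simp [mul_comm]

/-- If there exist `n+1` pairwise non-proportional nonzero vectors `ψᵢ ∈ ℂ²` with
`χ(ψᵢ^{⊗n}) ≤ r` for all `i`, then `χ_n ≤ r·(n+1)`; and likewise for the real
stabilizer rank and `χ_nℝ`. -/
theorem genStabRank_from_finitely_many (n r : ℕ) (hn : 1 ≤ n) (hr : 1 ≤ r) :
    ((∃ ψ : Fin (n + 1) → (ZMod 2 → ℂ),
        (∀ i, ψ i ≠ 0) ∧
        (∀ i j, i ≠ j → ∀ c : ℂ, ψ i ≠ c • ψ j) ∧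
        (∀ i, stabRank (tensorPow (ψ i) n) ≤ r)) →
      genStabRank n ≤ r * (n + 1)) ∧
    ((∃ ψ : Fin (n + 1) → (ZMod 2 → ℂ),
        (∀ i, ψ i ≠ 0) ∧
        (∀ i j, i ≠ j → ∀ c : ℂ, ψ i ≠ c • ψ j) ∧
        (∀ i, realStabRank (tensorPow (ψ i) n) ≤ r)) →
      genRealStabRank n ≤ r * (n + 1)) := by
  constructor
  · rintro ⟨ψs, hne, hprop, hle⟩
    apply csSup_le'
    rintro x ⟨ψ, hψ, rfl⟩
    rw [stabRank_eq]
    exact rank_tensorPow_le IsStabilizerState (fun x0 => real_to_stab (delta_real x0))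
      ψs hne hprop (fun i => by rw [← stabRank_eq]; exact hle i) ψ
  · rintro ⟨ψs, hne, hprop, hle⟩
    apply csSup_le'
    rintro x ⟨ψ, hψ, rfl⟩
    rw [realStabRank_eq]
    exact rank_tensorPow_le IsRealStabilizerState delta_real
      ψs hne hprop (fun i => by rw [← realStabRank_eq]; exact hle i) ψ

end StabPaper
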